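/- The linear map ψ from the filiform Lie algebra R_n to gl(n,ℂ) defined by ψ(e_1) = ∑_{i=1}^{n-2} E_{i,i+1}, ψ(e_2) = ∑_{i=1}^{n-3} E_{i,i+2} + E_{n-1,n}, and ψ(e_i) = E_{n+1-i,n} for 3 ≤ i ≤ n, is an injective Lie algebra homomorphism into the strictly upper-triangular n × n matrices. -/

import Mathlib

/-- Structure constants of the filiform Lie algebra `R_n`:
`[e_1,e_i] = -[e_i,e_1] = e_{i+1}` for `2 ≤ i ≤ n-1` and
`[e_2,e_i] = -[e_i,e_2] = e_{i+2}` for `3 ≤ i ≤ n-2`. -/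
noncomputable def cR (n i j k : ℕ) : ℂ :=
  (if i = 1 ∧ 2 ≤ j ∧ j ≤ n - 1 ∧ k = j + 1 then 1 else 0)
  - (if j = 1 ∧ 2 ≤ i ∧ i ≤ n - 1 ∧ k = i + 1 then 1 else 0)
  + (if i = 2 ∧ 3 ≤ j ∧ j ≤ n - 2 ∧ k = j + 2 then 1 else 0)
  - (if j = 2 ∧ 3 ≤ i ∧ i ≤ n - 2 ∧ k = i + 2 then 1 else 0)
/-- The elementary `N × N` matrix with `1` in (1-based) position `(i,j)`. -/
noncomputable def elemMat (N : ℕ) (i j : ℕ) : Matrix (Fin N) (Fin N) ℂ :=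
  Matrix.of fun a b => if (a : ℕ) + 1 = i ∧ (b : ℕ) + 1 = j then 1 else 0

/-- The matrices representing the basis of `R_n`:
`ψ(e_1) = ∑_{i=1}^{n-2} E_{i,i+1}`, `ψ(e_2) = ∑_{i=1}^{n-3} E_{i,i+2} + E_{n-1,n}`,
`ψ(e_i) = E_{n+1-i,n}` for `3 ≤ i ≤ n`. -/
noncomputable def MR (n i : ℕ) : Matrix (Fin n) (Fin n) ℂ :=
  if i = 1 then ∑ k ∈ Finset.Icc 1 (n - 2), elemMat n k (k + 1)
  else if i = 2 then
    (∑ k ∈ Finset.Icc 1 (n - 3), elemMat n k (k + 2)) + elemMat n (n - 1) n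
  else elemMat n (n + 1 - i) n

section helpers

lemma elemMat_mul_eq (N i j l : ℕ) (h1 : 1 ≤ j) (h2 : j ≤ N) :
    elemMat N i j * elemMat N j l = elemMat N i l := by
  ext a b
  rw [Matrix.mul_apply]
  rw [Finset.sum_eq_single (⟨j - 1, by omega⟩ : Fin N)]
  · simp only [elemMat, Matrix.of_apply]
    split_ifs <;> simp_all
  · intro c _ hc
    simp only [elemMat, Matrix.of_apply]
    have : ¬((c : ℕ) + 1 = j) := by
      intro h; apply hc; apply Fin.ext; simp; omega
    split_ifs <;> simp_all
  · simp

lemma elemMat_mul_ne (N i j k l : ℕ) (h : j ≠ k) :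
    elemMat N i j * elemMat N k l = 0 := by
  ext a b
  rw [Matrix.mul_apply]
  apply Finset.sum_eq_zero
  intro c _
  simp only [elemMat, Matrix.of_apply]
  split_ifs <;> simp_all

lemma sum_Icc_bot {M : Type*} [AddCommMonoid M] (a b : ℕ) (h : a ≤ b) (f : ℕ → M) :
    ∑ k ∈ Finset.Icc a b, f k = f a + ∑ k ∈ Finset.Icc (a + 1) b, f k := by
  rw [Finset.Icc_add_one_left_eq_Ioc, ← Finset.Icc_erase_left, Finset.add_sum_erase]
  simp [Finset.mem_Icc]; omega

lemma mulA_left (n r m : ℕ) (hn : 5 ≤ n) (h2 : 2 ≤ r) (h3 : r ≤ n - 1) :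
    MR n 1 * elemMat n r m = elemMat n (r - 1) m := by
  rw [MR, if_pos rfl, Finset.sum_mul]
  have : ∀ k ∈ Finset.Icc 1 (n - 2),
      elemMat n k (k + 1) * elemMat n r m
        = if k = r - 1 then elemMat n (r - 1) m else 0 := by
    intro k hk
    simp only [Finset.mem_Icc] at hk
    split_ifs with h
    · subst h
      rw [show r - 1 + 1 = r by omega]
      exact elemMat_mul_eq n (r - 1) r m (by omega) (by omega)
    · exact elemMat_mul_ne n k (k + 1) r m (by omega)
  rw [Finset.sum_congr rfl this, Finset.sum_ite_eq']
  rw [if_pos (by simp [Finset.mem_Icc]; omega)]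

lemma mulA_left0 (n m : ℕ) : MR n 1 * elemMat n 1 m = 0 := by
  rw [MR, if_pos rfl, Finset.sum_mul]
  apply Finset.sum_eq_zero
  intro k hk
  simp only [Finset.mem_Icc] at hk
  exact elemMat_mul_ne n k (k + 1) 1 m (by omega)

lemma mulA_right (n r m : ℕ) (h1 : 1 ≤ m) (h2 : m ≤ n - 2) :
    elemMat n r m * MR n 1 = elemMat n r (m + 1) := by
  rw [MR, if_pos rfl, Finset.mul_sum]
  have : ∀ k ∈ Finset.Icc 1 (n - 2),
      elemMat n r m * elemMat n k (k + 1)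
        = if k = m then elemMat n r (m + 1) else 0 := by
    intro k hk
    simp only [Finset.mem_Icc] at hk
    split_ifs with h
    · subst h; exact elemMat_mul_eq n r k (k + 1) (by omega) (by omega)
    · exact elemMat_mul_ne n r m k (k + 1) (by omega)
  rw [Finset.sum_congr rfl this, Finset.sum_ite_eq']
  rw [if_pos (by simp [Finset.mem_Icc]; omega)]

lemma mulA_right0 (n r m : ℕ) (h : n - 2 < m) : elemMat n r m * MR n 1 = 0 := by
  rw [MR, if_pos rfl, Finset.mul_sum]
  apply Finset.sum_eq_zero
  intro k hk
  simp only [Finset.mem_Icc] at hk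
  exact elemMat_mul_ne n r m k (k + 1) (by omega)

lemma mulB_left (n r m : ℕ) (hn : 5 ≤ n) (h2 : 3 ≤ r) (h3 : r ≤ n - 1) :
    MR n 2 * elemMat n r m = elemMat n (r - 2) m := by
  rw [MR, if_neg (by omega), if_pos rfl, add_mul, Finset.sum_mul]
  have : ∀ k ∈ Finset.Icc 1 (n - 3),
      elemMat n k (k + 2) * elemMat n r m
        = if k = r - 2 then elemMat n (r - 2) m else 0 := by
    intro k hk
    simp only [Finset.mem_Icc] at hk
    split_ifs with h
    · subst h
      rw [show r - 2 + 2 = r by omega]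
      exact elemMat_mul_eq n (r - 2) r m (by omega) (by omega)
    · exact elemMat_mul_ne n k (k + 2) r m (by omega)
  rw [Finset.sum_congr rfl this, Finset.sum_ite_eq']
  by_cases hr : r - 2 ∈ Finset.Icc 1 (n - 3)
  · rw [if_pos hr, elemMat_mul_ne n (n - 1) n r m (by omega), add_zero]
  · exfalso; simp [Finset.mem_Icc] at hr; omega

lemma mulB_left0 (n r m : ℕ) (hn : 5 ≤ n) (h : r ≤ 2) : MR n 2 * elemMat n r m = 0 := by
  rw [MR, if_neg (by omega), if_pos rfl, add_mul, Finset.sum_mul]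
  rw [elemMat_mul_ne n (n - 1) n r m (by omega)]
  rw [Finset.sum_eq_zero, zero_add]
  intro k hk
  simp only [Finset.mem_Icc] at hk
  exact elemMat_mul_ne n k (k + 2) r m (by omega)

lemma mulB_right0 (n r : ℕ) (hn : 5 ≤ n) : elemMat n r n * MR n 2 = 0 := by
  rw [MR, if_neg (by omega), if_pos rfl, mul_add, Finset.mul_sum]
  rw [elemMat_mul_ne n r n (n - 1) n (by omega)]
  rw [Finset.sum_eq_zero, zero_add]
  intro k hk
  simp only [Finset.mem_Icc] at hk
  exact elemMat_mul_ne n r n k (k + 2) (by omega)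

lemma AS (n : ℕ) (hn : 5 ≤ n) :
    MR n 1 * (∑ k ∈ Finset.Icc 1 (n - 3), elemMat n k (k + 2))
      = ∑ k ∈ Finset.Icc 1 (n - 4), elemMat n k (k + 3) := by
  rw [Finset.mul_sum]
  rw [sum_Icc_bot 1 (n - 3) (by omega)]
  rw [mulA_left0, zero_add]
  rw [show (2 : ℕ) = 1 + 1 from rfl, show n - 3 = (n - 4) + 1 by omega,
    ← Finset.map_add_right_Icc, Finset.sum_map]
  apply Finset.sum_congr rfl
  intro k hk
  simp only [Finset.mem_Icc] at hk
  show MR n 1 * elemMat n (k + 1) (k + 1 + 2) = elemMat n k (k + 3)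
  rw [mulA_left n (k + 1) (k + 1 + 2) hn (by omega) (by omega)]
  norm_num

lemma SA (n : ℕ) (hn : 5 ≤ n) :
    (∑ k ∈ Finset.Icc 1 (n - 3), elemMat n k (k + 2)) * MR n 1
      = ∑ k ∈ Finset.Icc 1 (n - 4), elemMat n k (k + 3) := by
  rw [Finset.sum_mul, show n - 3 = (n - 4) + 1 by omega,
    Finset.sum_Icc_succ_top (by omega)]
  rw [mulA_right0 n _ _ (by omega), add_zero]
  apply Finset.sum_congr rfl
  intro k hk
  simp only [Finset.mem_Icc] at hk
  rw [mulA_right n k (k + 2) (by omega) (by omega)]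

lemma bracket12 (n : ℕ) (hn : 5 ≤ n) :
    MR n 1 * MR n 2 - MR n 2 * MR n 1 = elemMat n (n - 2) n := by
  have hB : MR n 2 = (∑ k ∈ Finset.Icc 1 (n - 3), elemMat n k (k + 2))
      + elemMat n (n - 1) n := by
    rw [MR, if_neg (by norm_num), if_pos rfl]
  rw [hB, mul_add, add_mul, AS n hn, SA n hn,
    mulA_left n (n - 1) n hn (by omega) (by omega),
    mulA_right0 n (n - 1) n (by omega),
    show n - 1 - 1 = n - 2 by omega]
  abel

lemma MR_apply (n : ℕ) (hn : 5 ≤ n) (m : ℕ) (hm2 : m ≤ n) (a b : Fin n) :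
    MR n m a b =
      if (m = 1 ∧ (b : ℕ) = (a : ℕ) + 1 ∧ (a : ℕ) + 3 ≤ n)
        ∨ (m = 2 ∧ (b : ℕ) = (a : ℕ) + 2 ∧ (a : ℕ) + 4 ≤ n)
        ∨ (m = 2 ∧ (a : ℕ) + 2 = n ∧ (b : ℕ) + 1 = n)
        ∨ (3 ≤ m ∧ (a : ℕ) + m = n ∧ (b : ℕ) + 1 = n) then 1 else 0 := by
  rcases eq_or_ne m 1 with rfl | h1
  · rw [MR, if_pos rfl, Matrix.sum_apply]
    by_cases hab : (b : ℕ) = (a : ℕ) + 1 ∧ (a : ℕ) + 3 ≤ n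
    · rw [Finset.sum_eq_single ((a : ℕ) + 1)]
      · simp only [elemMat, Matrix.of_apply]
        split_ifs <;> (try simp only [true_and, and_true] at *) <;>
          first | rfl | omega | (norm_num; done) | (exfalso; omega)
      · intro c hc hne
        simp only [Finset.mem_Icc] at hc
        simp only [elemMat, Matrix.of_apply]
        rw [if_neg]; omega
      · intro h
        exfalso
        simp only [Finset.mem_Icc] at h
        omega
    · rw [if_neg (by omega), Finset.sum_eq_zero]
      intro c hc
      simp only [Finset.mem_Icc] at hc
      simp only [elemMat, Matrix.of_apply]
      rw [if_neg]; omega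
  rcases eq_or_ne m 2 with rfl | h2
  · rw [MR, if_neg (by omega), if_pos rfl, Matrix.add_apply, Matrix.sum_apply]
    by_cases hab : (b : ℕ) = (a : ℕ) + 2 ∧ (a : ℕ) + 4 ≤ n
    · rw [Finset.sum_eq_single ((a : ℕ) + 1)]
      · simp only [elemMat, Matrix.of_apply]
        split_ifs <;> (try simp only [true_and, and_true] at *) <;>
          first | rfl | omega | (norm_num; done) | (exfalso; omega)
      · intro c hc hne
        simp only [Finset.mem_Icc] at hc
        simp only [elemMat, Matrix.of_apply]
        rw [if_neg]; omega
      · intro h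
        exfalso
        simp only [Finset.mem_Icc] at h
        omega
    · rw [Finset.sum_eq_zero, zero_add]
      · simp only [elemMat, Matrix.of_apply]
        split_ifs <;> (try simp only [true_and, and_true] at *) <;>
          first | rfl | omega | (norm_num; done) | (exfalso; omega)
      · intro c hc
        simp only [Finset.mem_Icc] at hc
        simp only [elemMat, Matrix.of_apply]
        rw [if_neg]; omega
  · rw [MR, if_neg h1, if_neg h2]
    simp only [elemMat, Matrix.of_apply]
    split_ifs <;> (try simp only [true_and, and_true] at *) <;>
      first | rfl | omega | (norm_num; done) | (exfalso; omega)

lemma MR_ge3 (n i : ℕ) (h : 3 ≤ i) : MR n i = elemMat n (n + 1 - i) n := by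
  rw [MR, if_neg (by omega), if_neg (by omega)]

lemma lhs_single (n k0 i j : ℕ) (h1 : 1 ≤ k0) (h2 : k0 ≤ n)
    (hc : ∀ k, cR n i j k = if k = k0 then 1 else 0) :
    ∑ k ∈ Finset.Icc 1 n, cR n i j k • MR n k = MR n k0 := by
  simp only [hc, ite_smul, one_smul, zero_smul]
  rw [Finset.sum_ite_eq', if_pos (by simp [Finset.mem_Icc]; omega)]

lemma lhs_zero (n i j : ℕ) (hc : ∀ k, cR n i j k = 0) :
    ∑ k ∈ Finset.Icc 1 n, cR n i j k • MR n k = 0 :=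
  Finset.sum_eq_zero fun k _ => by rw [hc, zero_smul]

lemma key_forward (n : ℕ) (hn : 5 ≤ n) (i j : ℕ) (hi1 : 1 ≤ i) (hi2 : i ≤ n)
    (hj1 : 1 ≤ j) (hj2 : j ≤ n) (hij : i ≤ j) :
    ∑ k ∈ Finset.Icc 1 n, cR n i j k • MR n k
      = MR n i * MR n j - MR n j * MR n i := by
  rcases eq_or_lt_of_le hij with rfl | hlt
  · rw [sub_self]
    exact lhs_zero n i i fun k => by
      simp only [cR]
      split_ifs <;> (try simp only [true_and, and_true] at *) <;>
        first | omega | (norm_num; done) | (exfalso; omega)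
  by_cases hi' : i = 1
  · subst hi'
    by_cases hj' : j = 2
    · subst hj'
      rw [lhs_single n 3 1 2 (by omega) (by omega) (fun k => by
        simp only [cR]
        split_ifs <;> (try simp only [true_and, and_true] at *) <;>
          first | omega | (norm_num; done) | (exfalso; omega)),
        bracket12 n hn, MR_ge3 n 3 (by omega), show n + 1 - 3 = n - 2 by omega]
    by_cases hjn : j = n
    · rw [lhs_zero n 1 j (fun k => by
        simp only [cR]
        split_ifs <;> (try simp only [true_and, and_true] at *) <;>
          first | omega | (norm_num; done) | (exfalso; omega)),
        MR_ge3 n j (by omega), show n + 1 - j = 1 by omega,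
        mulA_left0 n n, mulA_right0 n 1 n (by omega), sub_self]
    · -- 3 ≤ j ≤ n - 1
      rw [lhs_single n (j + 1) 1 j (by omega) (by omega) (fun k => by
        simp only [cR]
        split_ifs <;> (try simp only [true_and, and_true] at *) <;>
          first | omega | (norm_num; done) | (exfalso; omega)),
        MR_ge3 n j (by omega),
        mulA_left n (n + 1 - j) n hn (by omega) (by omega),
        mulA_right0 n (n + 1 - j) n (by omega), sub_zero,
        MR_ge3 n (j + 1) (by omega),
        show n + 1 - (j + 1) = n + 1 - j - 1 by omega]
  by_cases hi'' : i = 2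
  · subst hi''
    by_cases hjn : j ≤ n - 2
    · rw [lhs_single n (j + 2) 2 j (by omega) (by omega) (fun k => by
        simp only [cR]
        split_ifs <;> (try simp only [true_and, and_true] at *) <;>
          first | omega | (norm_num; done) | (exfalso; omega)),
        MR_ge3 n j (by omega),
        mulB_left n (n + 1 - j) n hn (by omega) (by omega),
        mulB_right0 n (n + 1 - j) hn, sub_zero,
        MR_ge3 n (j + 2) (by omega),
        show n + 1 - (j + 2) = n + 1 - j - 2 by omega]
    · rw [lhs_zero n 2 j (fun k => by
        simp only [cR]
        split_ifs <;> (try simp only [true_and, and_true] at *) <;>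
          first | omega | (norm_num; done) | (exfalso; omega)),
        MR_ge3 n j (by omega),
        mulB_left0 n (n + 1 - j) n hn (by omega),
        mulB_right0 n (n + 1 - j) hn, sub_self]
  · rw [lhs_zero n i j (fun k => by
      simp only [cR]
      split_ifs <;> (try simp only [true_and, and_true] at *) <;>
        first | omega | (norm_num; done) | (exfalso; omega)),
      MR_ge3 n i (by omega), MR_ge3 n j (by omega),
      elemMat_mul_ne n (n + 1 - i) n (n + 1 - j) n (by omega),
      elemMat_mul_ne n (n + 1 - j) n (n + 1 - i) n (by omega), sub_self]

lemma key (n : ℕ) (hn : 5 ≤ n) (i j : ℕ) (hi1 : 1 ≤ i) (hi2 : i ≤ n)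
    (hj1 : 1 ≤ j) (hj2 : j ≤ n) :
    ∑ k ∈ Finset.Icc 1 n, cR n i j k • MR n k
      = MR n i * MR n j - MR n j * MR n i := by
  rcases le_total i j with hij | hij
  · exact key_forward n hn i j hi1 hi2 hj1 hj2 hij
  · have h := key_forward n hn j i hj1 hj2 hi1 hi2 hij
    have hc : ∀ k, cR n i j k = -cR n j i k := fun k => by simp only [cR]; ring
    calc ∑ k ∈ Finset.Icc 1 n, cR n i j k • MR n k
        = -∑ k ∈ Finset.Icc 1 n, cR n j i k • MR n k := by
          rw [← Finset.sum_neg_distrib]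
          exact Finset.sum_congr rfl fun k _ => by rw [hc k, neg_smul]
      _ = _ := by rw [h, neg_sub]

lemma key2 (n : ℕ) (hn : 5 ≤ n) (x i a b : Fin n)
    (hch : ((x : ℕ) = 0 ∧ (a : ℕ) = 0 ∧ (b : ℕ) = 1)
      ∨ ((x : ℕ) = 1 ∧ (a : ℕ) = n - 2 ∧ (b : ℕ) = n - 1)
      ∨ (2 ≤ (x : ℕ) ∧ (a : ℕ) = n - 1 - (x : ℕ) ∧ (b : ℕ) = n - 1)) :
    MR n ((i : ℕ) + 1) a b = if i = x then 1 else 0 := by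
  have hx := x.isLt
  have hi := i.isLt
  rw [MR_apply n hn ((i : ℕ) + 1) (by omega)]
  by_cases hix : i = x
  · have hiv : (i : ℕ) = (x : ℕ) := by rw [hix]
    rw [if_pos hix, if_pos (by omega)]
  · have hiv : (i : ℕ) ≠ (x : ℕ) := fun h => hix (Fin.ext h)
    rw [if_neg hix, if_neg (by omega)]

end helpers

/-- The map `ψ` sending `e_i` to `MR n i`, extended linearly, is an injective
Lie algebra homomorphism from `R_n` into the strictly upper-triangular `n × n`
complex matrices. -/
theorem Rn_minimal_representation (n : ℕ) (hn : 5 ≤ n) :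
    (∀ i ∈ Finset.Icc 1 n, ∀ j ∈ Finset.Icc 1 n,
      ∑ k ∈ Finset.Icc 1 n, cR n i j k • MR n k
        = MR n i * MR n j - MR n j * MR n i) ∧
    Function.Injective
      (fun f : Fin n → ℂ => ∑ i : Fin n, f i • MR n ((i : ℕ) + 1)) ∧
    (∀ i ∈ Finset.Icc 1 n, ∀ a b : Fin n, (b : ℕ) ≤ (a : ℕ) → MR n i a b = 0) := by
  refine ⟨?_, ?_, ?_⟩
  · intro i hi j hj
    simp only [Finset.mem_Icc] at hi hj
    exact key n hn i j hi.1 hi.2 hj.1 hj.2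
  · intro f g h
    simp only at h
    have hd : ∑ i : Fin n, (f i - g i) • MR n ((i : ℕ) + 1) = 0 := by
      simp only [sub_smul, Finset.sum_sub_distrib, h, sub_self]
    funext x
    have hx := x.isLt
    obtain ⟨a, b, hch⟩ : ∃ a b : Fin n,
        ((x : ℕ) = 0 ∧ (a : ℕ) = 0 ∧ (b : ℕ) = 1)
          ∨ ((x : ℕ) = 1 ∧ (a : ℕ) = n - 2 ∧ (b : ℕ) = n - 1)
          ∨ (2 ≤ (x : ℕ) ∧ (a : ℕ) = n - 1 - (x : ℕ) ∧ (b : ℕ) = n - 1) := by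
      by_cases hx0 : (x : ℕ) = 0
      · exact ⟨⟨0, by omega⟩, ⟨1, by omega⟩, Or.inl ⟨hx0, rfl, rfl⟩⟩
      by_cases hx1 : (x : ℕ) = 1
      · exact ⟨⟨n - 2, by omega⟩, ⟨n - 1, by omega⟩, Or.inr (Or.inl ⟨hx1, rfl, rfl⟩)⟩
      · exact ⟨⟨n - 1 - (x : ℕ), by omega⟩, ⟨n - 1, by omega⟩,
          Or.inr (Or.inr ⟨by omega, rfl, rfl⟩)⟩
    have h3 : (∑ i : Fin n, (f i - g i) • MR n ((i : ℕ) + 1)) a b = 0 := by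
      rw [hd]; rfl
    rw [Matrix.sum_apply] at h3
    simp only [Matrix.smul_apply, smul_eq_mul] at h3
    have h4 : ∑ i : Fin n, (f i - g i) * (if i = x then 1 else 0) = 0 := by
      refine Eq.trans (Finset.sum_congr rfl fun i _ => ?_) h3
      rw [key2 n hn x i a b hch]
    simp only [mul_ite, mul_one, mul_zero] at h4
    rw [Finset.sum_ite_eq' Finset.univ x (fun i => f i - g i),
      if_pos (Finset.mem_univ x)] at h4
    exact sub_eq_zero.mp h4
  · intro i hi a b hba
    simp only [Finset.mem_Icc] at hi
    rw [MR_apply n hn i hi.2, if_neg (by omega)]
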